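/- For every vector u ∈ ℝ³ there exist vectors v, w ∈ ℝ³ such that u = v ×₃ w, ⟪v, w⟫ = 0, and ‖v‖ = ‖w‖ = √‖u‖. In particular, every vector in ℝ³ is the cross product of two vectors of equal length. -/

import Mathlib

open Matrix RealInnerProductSpace

/-- Every vector `u ∈ ℝ³` is the cross product `u = v ×₃ w` of two orthogonal vectors
`v, w` of equal length `√‖u‖`. -/
theorem exists_cross_product_decomposition (u : EuclideanSpace ℝ (Fin 3)) :
    ∃ v w : EuclideanSpace ℝ (Fin 3),
      (u : Fin 3 → ℝ) = (v : Fin 3 → ℝ) ⨯₃ (w : Fin 3 → ℝ) ∧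
      ⟪v, w⟫ = 0 ∧ ‖v‖ = Real.sqrt ‖u‖ ∧ ‖w‖ = Real.sqrt ‖u‖ := by
  by_cases hu : u = 0
  · refine ⟨0, 0, ?_, ?_, ?_, ?_⟩ <;>
      simp [hu, cross_apply]
  -- find a unit vector e orthogonal to u
  obtain ⟨x, hxmem, hx0⟩ : ∃ x ∈ (ℝ ∙ u)ᗮ, x ≠ 0 := by
    apply Submodule.exists_mem_ne_zero_of_ne_bot
    intro hbot
    have h1 : Module.finrank ℝ (ℝ ∙ u) = 1 := finrank_span_singleton hu
    have h2 := Submodule.finrank_add_finrank_orthogonal (K := ℝ ∙ u)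
    rw [hbot] at h2
    simp [h1, finrank_euclideanSpace_fin] at h2
  set e : EuclideanSpace ℝ (Fin 3) := ‖x‖⁻¹ • x with he
  have hne : ‖e‖ = 1 := norm_smul_inv_norm hx0
  have heu : ⟪e, u⟫ = 0 := by
    have h0 : ⟪x, u⟫ = 0 := by
      rw [real_inner_comm]
      exact hxmem u (Submodule.mem_span_singleton_self u)
    rw [he, real_inner_smul_left, h0, mul_zero]
  have hi : e 0 * u 0 + e 1 * u 1 + e 2 * u 2 = 0 := by
    simpa [PiLp.inner_apply, Fin.sum_univ_three, RCLike.inner_apply, mul_comm] using heu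
  have hn : e 0 ^ 2 + e 1 ^ 2 + e 2 ^ 2 = 1 := by
    have h := hne
    rw [EuclideanSpace.norm_eq] at h
    have h' := Real.sqrt_eq_one.mp h
    simpa [Fin.sum_univ_three, Real.norm_eq_abs, sq_abs] using h'
  set s : ℝ := Real.sqrt ‖u‖ with hs
  have hs0 : 0 < s := Real.sqrt_pos.mpr (norm_pos_iff.mpr hu)
  have hs2 : s * s = ‖u‖ := Real.mul_self_sqrt (norm_nonneg u)
  set c : EuclideanSpace ℝ (Fin 3) :=
    WithLp.toLp 2 ((u : Fin 3 → ℝ) ⨯₃ (e : Fin 3 → ℝ) : Fin 3 → ℝ) with hc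
  have hu2 : u 0 ^ 2 + u 1 ^ 2 + u 2 ^ 2 = ‖u‖ ^ 2 := by
    rw [EuclideanSpace.norm_eq, Real.sq_sqrt (by positivity)]
    simp [Fin.sum_univ_three, Real.norm_eq_abs, sq_abs]
  have hcnorm : ‖c‖ = ‖u‖ := by
    rw [EuclideanSpace.norm_eq, Fin.sum_univ_three]
    have h1 : ‖c 0‖ ^ 2 + ‖c 1‖ ^ 2 + ‖c 2‖ ^ 2 = ‖u‖ ^ 2 := by
      show ‖u 1 * e 2 - u 2 * e 1‖ ^ 2 + ‖u 2 * e 0 - u 0 * e 2‖ ^ 2 +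
        ‖u 0 * e 1 - u 1 * e 0‖ ^ 2 = ‖u‖ ^ 2
      simp only [Real.norm_eq_abs, sq_abs]
      nlinarith [hi, hn, hu2]
    rw [h1]
    exact Real.sqrt_sq (norm_nonneg u)
  have hv : ∀ j, (s • e) j = s * e j := fun j => rfl
  have hw : ∀ j : Fin 3, (s⁻¹ • c) j = s⁻¹ * c j := fun j => rfl
  have hc0 : c 0 = u 1 * e 2 - u 2 * e 1 := rfl
  have hc1 : c 1 = u 2 * e 0 - u 0 * e 2 := rfl
  have hc2 : c 2 = u 0 * e 1 - u 1 * e 0 := rfl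
  refine ⟨s • e, s⁻¹ • c, ?_, ?_, ?_, ?_⟩
  · funext i
    rw [cross_apply]
    fin_cases i
    · show u 0 = (s • e) 1 * (s⁻¹ • c) 2 - (s • e) 2 * (s⁻¹ • c) 1
      rw [hv, hv, hw, hw, hc1, hc2]
      field_simp
      linear_combination (-(u 0)) * hn + e 0 * hi
    · show u 1 = (s • e) 2 * (s⁻¹ • c) 0 - (s • e) 0 * (s⁻¹ • c) 2
      rw [hv, hv, hw, hw, hc0, hc2]
      field_simp
      linear_combination (-(u 1)) * hn + e 1 * hi
    · show u 2 = (s • e) 0 * (s⁻¹ • c) 1 - (s • e) 1 * (s⁻¹ • c) 0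
      rw [hv, hv, hw, hw, hc0, hc1]
      field_simp
      linear_combination (-(u 2)) * hn + e 2 * hi
  · simp only [PiLp.inner_apply, RCLike.inner_apply, conj_trivial, Fin.sum_univ_three,
      hv, hw, hc0, hc1, hc2]
    ring
  · rw [norm_smul, hne, Real.norm_eq_abs, abs_of_pos hs0, mul_one]
  · rw [norm_smul, hcnorm, Real.norm_eq_abs, abs_of_pos (inv_pos.mpr hs0)]
    field_simp
    rw [sq]
    exact hs2.symm
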